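/- Let g : [0,1] → ℝ≥0 be continuous with g(0) = g(1) = 0 and define the equivalence s ∼_g t iff g(s) = g(t) = m_g(s,t), where m_g(s,t) = min over [s∧t, s∨t] of g. Fix s* ∈ [0,1] and define ḡ(t) = g(s*) + g(s* ⊕ t) − 2 m_g(s*, s* ⊕ t), where s* ⊕ t = s* + t if s* + t ≤ 1 and s* + t − 1 otherwise. Then for all t, t' ∈ [0,1]: s* ⊕ t ∼_g s* ⊕ t' if and only if t ∼_{ḡ} t'. -/

import Mathlib

open Set

/-- `m_g(s,t)`: the minimum (infimum) of `g` over the closed interval between `s` and `t`. -/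
noncomputable def mg (g : ℝ → ℝ) (s t : ℝ) : ℝ := sInf (g '' Set.uIcc s t)

/-- `δ_g(s,t) = g(s) + g(t) − 2 m_g(s,t)`, the tree pseudometric coded by `g`. -/
noncomputable def deltag (g : ℝ → ℝ) (s t : ℝ) : ℝ := g s + g t - 2 * mg g s t

/-- The equivalence relation coded by `g`: `s ∼_g t` iff `g(s) = g(t) = m_g(s,t)`. -/
def simg (g : ℝ → ℝ) (s t : ℝ) : Prop := g s = g t ∧ g s = mg g s t

/-- Cyclic shift on `[0,1]`: `s ⊕ t = s + t` if `s + t ≤ 1`, and `s + t − 1` otherwise. -/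
noncomputable def oplus (s t : ℝ) : ℝ := if s + t ≤ 1 then s + t else s + t - 1

/-- The re-rooted coding function `ḡ(t) = g(s*) + g(s* ⊕ t) − 2 m_g(s*, s* ⊕ t)`. -/
noncomputable def gbar (g : ℝ → ℝ) (sstar t : ℝ) : ℝ :=
  g sstar + g (oplus sstar t) - 2 * mg g sstar (oplus sstar t)

lemma mg_comm (g : ℝ → ℝ) (s t : ℝ) : mg g s t = mg g t s := by
  unfold mg; rw [uIcc_comm]

lemma mg_le (g : ℝ → ℝ) {s t x : ℝ} (hb : BddBelow (g '' uIcc s t))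
    (hx : x ∈ uIcc s t) : mg g s t ≤ g x :=
  csInf_le hb (mem_image_of_mem g hx)

lemma le_mg (g : ℝ → ℝ) {s t c : ℝ} (h : ∀ x ∈ uIcc s t, c ≤ g x) : c ≤ mg g s t :=
  le_csInf (Nonempty.image g nonempty_uIcc) (by rintro y ⟨x, hx, rfl⟩; exact h x hx)

lemma bdd_of_nonneg {g : ℝ → ℝ} {A : Set ℝ} (h : ∀ x ∈ A, 0 ≤ g x) :
    BddBelow (g '' A) := ⟨0, by rintro y ⟨x, hx, rfl⟩; exact h x hx⟩

/-- splitting lemma -/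
lemma mg_split (g : ℝ → ℝ) {a c b : ℝ} (hac : a ≤ c) (hcb : c ≤ b)
    (h1 : BddBelow (g '' uIcc a c)) (h2 : BddBelow (g '' uIcc c b)) :
    mg g a b = min (mg g a c) (mg g c b) := by
  unfold mg
  rw [uIcc_of_le hac, uIcc_of_le hcb, uIcc_of_le (hac.trans hcb),
    ← Icc_union_Icc_eq_Icc hac hcb, image_union]
  rw [uIcc_of_le hac] at h1; rw [uIcc_of_le hcb] at h2
  exact csInf_union h1 (Nonempty.image g (nonempty_Icc.2 hac)) h2
    (Nonempty.image g (nonempty_Icc.2 hcb))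

lemma mg_exists (g : ℝ → ℝ) {s t : ℝ} (hc : ContinuousOn g (uIcc s t)) :
    ∃ x ∈ uIcc s t, g x = mg g s t ∧ ∀ y ∈ uIcc s t, g x ≤ g y := by
  obtain ⟨x, hx, hmin⟩ := isCompact_uIcc.exists_isMinOn nonempty_uIcc hc
  refine ⟨x, hx, ?_, fun y hy => hmin hy⟩
  refine le_antisymm (le_csInf (Nonempty.image g nonempty_uIcc) ?_)
    (csInf_le ⟨g x, by rintro y ⟨z, hz, rfl⟩; exact hmin hz⟩ (mem_image_of_mem g hx))
  rintro y ⟨z, hz, rfl⟩; exact hmin hz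

lemma sInf_const_add (c : ℝ) (f : ℝ → ℝ) {A : Set ℝ} (hA : A.Nonempty)
    (hb : BddBelow (f '' A)) :
    sInf ((fun x => c + f x) '' A) = c + sInf (f '' A) := by
  have h1 : (fun x => c + f x) '' A = (OrderIso.addLeft c) '' (f '' A) := by
    rw [image_image]; rfl
  rw [h1, ← OrderIso.map_csInf' _ (hA.image f) hb]; rfl

lemma mg_mono (g : ℝ → ℝ) {a b c d : ℝ} (h : uIcc a b ⊆ uIcc c d)
    (hb : BddBelow (g '' uIcc c d)) : mg g c d ≤ mg g a b :=
  csInf_le_csInf hb (Nonempty.image g nonempty_uIcc) (Set.image_mono h)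

lemma star (g : ℝ → ℝ) {s a b : ℝ} (hsa : s ≤ a) (hab : a ≤ b)
    (hc : ContinuousOn g (Icc s b)) (hnn : ∀ x ∈ Icc s b, 0 ≤ g x) :
    sInf ((fun v => g v - 2 * mg g s v) '' Icc a b)
      = mg g a b - mg g s a - mg g s b := by
  have hsb : s ≤ b := hsa.trans hab
  have hB : ∀ u v : ℝ, s ≤ u → u ≤ v → v ≤ b → BddBelow (g '' uIcc u v) := by
    intro u v h1 h2 h3
    refine bdd_of_nonneg fun x hx => hnn x ?_
    rw [uIcc_of_le h2] at hx
    exact ⟨h1.trans hx.1, hx.2.trans h3⟩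
  have hgs : ∀ v, s ≤ v → v ≤ b → mg g s v ≤ g s :=
    fun v h1 h2 => mg_le g (hB s v le_rfl h1 h2) left_mem_uIcc
  have hFbdd : BddBelow ((fun v => g v - 2 * mg g s v) '' Icc a b) := by
    refine ⟨-2 * g s, ?_⟩
    rintro y ⟨v, hv, rfl⟩
    have h1 := hgs v (hsa.trans hv.1) hv.2
    have h2 := hnn v ⟨hsa.trans hv.1, hv.2⟩
    simp only; linarith
  have e2 : mg g s b = min (mg g s a) (mg g a b) :=
    mg_split g hsa hab (hB s a le_rfl hsa hab) (hB a b hsa hab le_rfl)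
  refine le_antisymm ?_ ?_
  · -- lower bound attained
    rcases le_or_gt (mg g s a) (mg g a b) with hca | hca
    · obtain ⟨v0, hv0, hgv0, _⟩ := mg_exists g
        ((hc.mono (Icc_subset_Icc hsa le_rfl)).mono (by rw [uIcc_of_le hab]))
      rw [uIcc_of_le hab] at hv0
      have hav0 : mg g s a ≤ mg g a v0 := by
        refine hca.trans (mg_mono g ?_ (hB a b hsa hab le_rfl))
        rw [uIcc_of_le hab, uIcc_of_le hv0.1]
        exact Icc_subset_Icc le_rfl hv0.2
      have hFv0 : g v0 - 2 * mg g s v0 = mg g a b - 2 * mg g s a := by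
        have : mg g s v0 = min (mg g s a) (mg g a v0) :=
          mg_split g hsa hv0.1 (hB s a le_rfl hsa hab) (hB a v0 hsa hv0.1 hv0.2)
        rw [this, min_eq_left hav0, hgv0]
      have h5 : sInf ((fun v => g v - 2 * mg g s v) '' Icc a b)
          ≤ g v0 - 2 * mg g s v0 := csInf_le hFbdd (mem_image_of_mem _ hv0)
      rw [e2, min_eq_left hca]
      linarith
    · -- mg g a b < mg g s a ; hitting time construction
      set c := mg g s a with hcdef
      obtain ⟨v0, hv0, hgv0, _⟩ := mg_exists g
        ((hc.mono (Icc_subset_Icc hsa le_rfl)).mono (by rw [uIcc_of_le hab]))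
      rw [uIcc_of_le hab] at hv0
      set S : Set ℝ := {v ∈ Icc a b | g v < c} with hSdef
      have hSne : S.Nonempty := ⟨v0, hv0, by rw [hgv0]; exact hca⟩
      have hSbdd : BddBelow S := ⟨a, fun v hv => hv.1.1⟩
      set w := sInf S with hwdef
      have hwK : w ∈ Icc a b ∩ g ⁻¹' (Iic c) := by
        have hK : IsClosed (Icc a b ∩ g ⁻¹' (Iic c)) :=
          (hc.mono (Icc_subset_Icc hsa le_rfl)).preimage_isClosed_of_isClosed
            isClosed_Icc isClosed_Iic
        have : closure S ⊆ Icc a b ∩ g ⁻¹' (Iic c) :=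
          closure_minimal (fun v hv => ⟨hv.1, le_of_lt hv.2⟩) hK
        exact this (csInf_mem_closure hSne hSbdd)
      have hwab : w ∈ Icc a b := hwK.1
      have hIco : ∀ y ∈ Ico a w, c ≤ g y := by
        intro y hy
        have hnot : y ∉ S := notMem_of_lt_csInf hy.2 hSbdd
        have : y ∈ Icc a b := ⟨hy.1, (hy.2.le.trans hwab.2)⟩
        by_contra hcon
        exact hnot ⟨this, lt_of_not_ge hcon⟩
      have hgw_ge : c ≤ g w := by
        rcases eq_or_lt_of_le hwab.1 with heq | hlt
        · rw [← heq]
          exact mg_le g (hB s a le_rfl hsa hab) right_mem_uIcc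
        · have hK : IsClosed (Icc a b ∩ g ⁻¹' (Ici c)) :=
            (hc.mono (Icc_subset_Icc hsa le_rfl)).preimage_isClosed_of_isClosed
              isClosed_Icc isClosed_Ici
          have hsub : Ico a w ⊆ Icc a b ∩ g ⁻¹' (Ici c) := fun y hy =>
            ⟨⟨hy.1, hy.2.le.trans hwab.2⟩, hIco y hy⟩
          have hcl : closure (Ico a w) ⊆ Icc a b ∩ g ⁻¹' (Ici c) :=
            closure_minimal hsub hK
          have : w ∈ closure (Ico a w) := by
            rw [closure_Ico (ne_of_lt hlt)]
            exact ⟨hwab.1, le_rfl⟩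
          exact (hcl this).2
      have hgw : g w = c := le_antisymm hwK.2 hgw_ge
      have haw : mg g a w = c := by
        refine le_antisymm ?_ (le_mg g ?_)
        · rw [← hgw]
          exact mg_le g (hB a w hsa hwab.1 (hwab.2)) right_mem_uIcc
        · intro y hy
          rw [uIcc_of_le hwab.1] at hy
          rcases eq_or_lt_of_le hy.2 with heq | hlt
          · rw [heq, hgw]
          · exact hIco y ⟨hy.1, hlt⟩
      have hFw : g w - 2 * mg g s w = -c := by
        have : mg g s w = min (mg g s a) (mg g a w) :=
          mg_split g hsa hwab.1 (hB s a le_rfl hsa hab) (hB a w hsa hwab.1 hwab.2)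
        rw [this, haw, ← hcdef, min_self, hgw]; ring
      have h5 : sInf ((fun v => g v - 2 * mg g s v) '' Icc a b)
          ≤ g w - 2 * mg g s w := csInf_le hFbdd (mem_image_of_mem _ hwab)
      rw [e2, min_eq_right hca.le]
      rw [hFw] at h5
      linarith
  · -- lower bound: pointwise
    refine le_csInf (Nonempty.image _ (nonempty_Icc.2 hab)) ?_
    rintro y ⟨v, hv, rfl⟩
    have hav : a ≤ v := hv.1
    have hvb : v ≤ b := hv.2
    have e1 : mg g s v = min (mg g s a) (mg g a v) :=
      mg_split g hsa hav (hB s a le_rfl hsa hab) (hB a v hsa hav hvb)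
    have i1 : mg g a b ≤ mg g a v := by
      refine mg_mono g ?_ (hB a b hsa hab le_rfl)
      rw [uIcc_of_le hab, uIcc_of_le hav]
      exact Icc_subset_Icc le_rfl hvb
    have i2 : mg g a v ≤ g v := mg_le g (hB a v hsa hav hvb) right_mem_uIcc
    simp only
    rw [e1, e2, min_def, min_def]
    split_ifs <;> linarith

lemma star' (g : ℝ → ℝ) {s a b : ℝ} (hba : b ≤ a) (has : a ≤ s)
    (hc : ContinuousOn g (Icc b s)) (hnn : ∀ x ∈ Icc b s, 0 ≤ g x) :
    sInf ((fun v => g v - 2 * mg g s v) '' Icc b a)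
      = mg g b a - mg g s a - mg g s b := by
  set h : ℝ → ℝ := fun x => g (-x) with hhdef
  have key : ∀ x y : ℝ, mg h x y = mg g (-x) (-y) := by
    intro x y
    unfold mg
    rw [show h '' uIcc x y = (g ∘ Neg.neg) '' uIcc x y from rfl,
      image_comp, image_neg_uIcc]
  have hmap : ∀ x ∈ Icc (-s) (-b), -x ∈ Icc b s := by
    intro x hx
    constructor <;> [linarith [hx.2]; linarith [hx.1]]
  have hch : ContinuousOn h (Icc (-s) (-b)) := by
    refine ContinuousOn.comp hc (continuous_neg.continuousOn) hmap
  have hnnh : ∀ x ∈ Icc (-s) (-b), 0 ≤ h x := fun x hx => hnn (-x) (hmap x hx)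
  have hstar := star h (s := -s) (a := -a) (b := -b)
    (by linarith) (by linarith) hch hnnh
  have himg : (fun v => g v - 2 * mg g s v) '' Icc b a
      = (fun v => h v - 2 * mg h (-s) v) '' Icc (-a) (-b) := by
    have hfun : (fun v => h v - 2 * mg h (-s) v)
        = (fun w => g w - 2 * mg g s w) ∘ Neg.neg := by
      funext v
      simp only [Function.comp_apply, hhdef]
      rw [key (-s) v, neg_neg]
    rw [hfun, image_comp, image_neg_Icc, neg_neg, neg_neg]
  rw [himg, hstar, key, key, key, neg_neg, neg_neg, neg_neg, mg_comm g a b]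

lemma uIcc_subset_unit {u v : ℝ} (hu : u ∈ Icc (0:ℝ) 1) (hv : v ∈ Icc (0:ℝ) 1) :
    uIcc u v ⊆ Icc 0 1 := by
  rw [← uIcc_of_le (zero_le_one (α := ℝ))]
  exact uIcc_subset_uIcc (by rwa [uIcc_of_le zero_le_one])
    (by rwa [uIcc_of_le zero_le_one])

lemma bdd01 {g : ℝ → ℝ} (hnn : ∀ x ∈ Icc (0:ℝ) 1, 0 ≤ g x) {u v : ℝ}
    (hu : u ∈ Icc (0:ℝ) 1) (hv : v ∈ Icc (0:ℝ) 1) : BddBelow (g '' uIcc u v) :=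
  bdd_of_nonneg fun x hx => hnn x (uIcc_subset_unit hu hv hx)

lemma mg_eq_zero (g : ℝ → ℝ) {s t x : ℝ} (hnn : ∀ y ∈ uIcc s t, 0 ≤ g y)
    (hx : x ∈ uIcc s t) (hgx : g x = 0) : mg g s t = 0 :=
  le_antisymm (hgx ▸ mg_le g (bdd_of_nonneg hnn) hx) (le_mg g hnn)

lemma oplus_mem {s t : ℝ} (hs : s ∈ Icc (0:ℝ) 1) (ht : t ∈ Icc (0:ℝ) 1) :
    oplus s t ∈ Icc (0:ℝ) 1 := by
  unfold oplus
  split_ifs with h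
  · exact ⟨by linarith [hs.1, ht.1], h⟩
  · exact ⟨by linarith, by linarith [hs.2, ht.2]⟩

lemma bddF (g : ℝ → ℝ) (hnn : ∀ x ∈ Icc (0:ℝ) 1, 0 ≤ g x) {s : ℝ}
    (hs : s ∈ Icc (0:ℝ) 1) {A : Set ℝ} (hA : A ⊆ Icc 0 1) :
    BddBelow ((fun v => g v - 2 * mg g s v) '' A) := by
  refine ⟨-2 * g s, ?_⟩
  rintro y ⟨v, hv, rfl⟩
  have h1 : mg g s v ≤ g s := mg_le g (bdd01 hnn hs (hA hv)) left_mem_uIcc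
  have h2 : 0 ≤ g v := hnn v (hA hv)
  simp only; linarith

lemma gbar_nonneg (g : ℝ → ℝ) (hnn : ∀ x ∈ Icc (0:ℝ) 1, 0 ≤ g x) {s : ℝ}
    (hs : s ∈ Icc (0:ℝ) 1) : ∀ r ∈ Icc (0:ℝ) 1, 0 ≤ gbar g s r := by
  intro r hr
  have hu := oplus_mem hs hr
  have hb := bdd01 hnn hs hu
  have h1 : mg g s (oplus s r) ≤ g s := mg_le g hb left_mem_uIcc
  have h2 : mg g s (oplus s r) ≤ g (oplus s r) := mg_le g hb right_mem_uIcc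
  unfold gbar; linarith

lemma main_le (g : ℝ → ℝ) (hc : ContinuousOn g (Icc 0 1))
    (hnn : ∀ x ∈ Icc (0:ℝ) 1, 0 ≤ g x) (h0 : g 0 = 0) (h1 : g 1 = 0)
    {s t t' : ℝ} (hs : s ∈ Icc (0:ℝ) 1) (ht : t ∈ Icc (0:ℝ) 1)
    (ht' : t' ∈ Icc (0:ℝ) 1) (htt' : t ≤ t') :
    deltag (gbar g s) t t' = deltag g (oplus s t) (oplus s t') := by
  by_cases hC1 : s + t' ≤ 1
  · -- no wrap
    have hC0 : s + t ≤ 1 := by linarith [ht.1, ht'.1]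
    have hopt : oplus s t = s + t := if_pos hC0
    have hopt' : oplus s t' = s + t' := if_pos hC1
    have hsa : s ≤ s + t := le_add_of_nonneg_right ht.1
    have hab : s + t ≤ s + t' := by linarith
    have hamem : s + t ∈ Icc (0:ℝ) 1 := ⟨by linarith [hs.1, ht.1], hC0⟩
    have hbmem : s + t' ∈ Icc (0:ℝ) 1 := ⟨by linarith [hs.1, ht'.1], hC1⟩
    have himg : gbar g s '' Icc t t'
        = (fun v => g s + (g v - 2 * mg g s v)) '' Icc (s + t) (s + t') := by
      rw [← Set.image_const_add_Icc s t t', image_image]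
      refine image_congr fun r hr => ?_
      unfold gbar oplus
      rw [if_pos (by linarith [hr.2] : s + r ≤ 1)]
      ring
    have hmgbar : mg (gbar g s) t t'
        = g s + (mg g (s+t) (s+t') - mg g s (s+t) - mg g s (s+t')) := by
      unfold mg
      rw [uIcc_of_le htt']
      show sInf (gbar g s '' Icc t t') = _
      rw [himg, sInf_const_add _ _ (nonempty_Icc.2 hab)
        (bddF g hnn hs (Icc_subset_Icc hamem.1 hbmem.2))]
      rw [star g hsa hab (hc.mono (Icc_subset_Icc hs.1 hbmem.2))
        (fun x hx => hnn x ⟨hs.1.trans hx.1, hx.2.trans hbmem.2⟩)]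
      rfl
    simp only [deltag, gbar, hopt, hopt', hmgbar]
    ring
  · by_cases hC2 : s + t ≤ 1
    · -- wrap inside the interval: s + t ≤ 1 < s + t'
      push_neg at hC1
      have hopt : oplus s t = s + t := if_pos hC2
      have hopt' : oplus s t' = s + t' - 1 := if_neg (not_le.2 hC1)
      have ht1s : t ≤ 1 - s := by linarith
      have h1st' : 1 - s ≤ t' := by linarith
      have hsa : s ≤ s + t := le_add_of_nonneg_right ht.1
      have h0b : (0:ℝ) ≤ s + t' - 1 := by linarith
      have hbs : s + t' - 1 ≤ s := by linarith [ht'.2]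
      have hamem : s + t ∈ Icc (0:ℝ) 1 := ⟨by linarith [hs.1, ht.1], hC2⟩
      have hbmem : s + t' - 1 ∈ Icc (0:ℝ) 1 := ⟨h0b, by linarith [hs.2, ht'.2]⟩
      -- the two pieces of the image
      have himg1 : gbar g s '' Icc t (1 - s)
          = (fun v => g s + (g v - 2 * mg g s v)) '' Icc (s + t) 1 := by
        rw [show Icc (s + t) (1:ℝ) = (fun x => s + x) '' Icc t (1 - s) by
          rw [Set.image_const_add_Icc]; congr 1; ring]
        rw [image_image]
        refine image_congr fun r hr => ?_
        unfold gbar oplus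
        rw [if_pos (by linarith [hr.2] : s + r ≤ 1)]
        ring
      have himg2 : gbar g s '' Icc (1 - s) t'
          = (fun v => g s + (g v - 2 * mg g s v)) '' Icc 0 (s + t' - 1) := by
        rw [show Icc (0:ℝ) (s + t' - 1) = (fun x => (s - 1) + x) '' Icc (1 - s) t' by
          rw [Set.image_const_add_Icc]; congr 1 <;> ring]
        rw [image_image]
        refine image_congr fun r hr => ?_
        rcases eq_or_lt_of_le hr.1 with heq | hlt
        · have hr0 : r = 1 - s := heq.symm
          subst hr0
          unfold gbar oplus
          rw [if_pos (by linarith : s + (1 - s) ≤ 1)]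
          rw [show s + (1 - s) = 1 by ring, show (s - 1) + (1 - s) = 0 by ring]
          have hm1 : mg g s 1 = 0 := mg_eq_zero g
            (fun y hy => hnn y (uIcc_subset_unit hs (by norm_num) hy))
            right_mem_uIcc h1
          have hm0 : mg g s 0 = 0 := mg_eq_zero g
            (fun y hy => hnn y (uIcc_subset_unit hs (by norm_num) hy))
            right_mem_uIcc h0
          rw [hm1, hm0, h0, h1]; ring
        · unfold gbar oplus
          rw [if_neg (not_le.2 (by linarith : (1:ℝ) < s + r))]
          rw [show s + r - 1 = (s - 1) + r by ring]
          ring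
      have hsinf1 : sInf (gbar g s '' Icc t (1 - s))
          = g s - mg g s (s + t) := by
        rw [himg1, sInf_const_add _ _ (nonempty_Icc.2 hC2)
          (bddF g hnn hs (Icc_subset_Icc hamem.1 le_rfl))]
        rw [star g hsa hC2 (hc.mono (Icc_subset_Icc hs.1 le_rfl))
          (fun x hx => hnn x ⟨hs.1.trans hx.1, hx.2⟩)]
        have hm1 : mg g s 1 = 0 := mg_eq_zero g
          (fun y hy => hnn y (uIcc_subset_unit hs (by norm_num) hy))
          right_mem_uIcc h1
        have hma1 : mg g (s + t) 1 = 0 := mg_eq_zero g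
          (fun y hy => hnn y (uIcc_subset_unit hamem (by norm_num) hy))
          right_mem_uIcc h1
        rw [hm1, hma1]; ring
      have hsinf2 : sInf (gbar g s '' Icc (1 - s) t')
          = g s - mg g s (s + t' - 1) := by
        rw [himg2, sInf_const_add _ _ (nonempty_Icc.2 h0b)
          (bddF g hnn hs (Icc_subset_Icc (by norm_num) hbmem.2))]
        rw [star' g h0b hbs (hc.mono (Icc_subset_Icc le_rfl hs.2))
          (fun x hx => hnn x ⟨hx.1, hx.2.trans hs.2⟩)]
        have hm0 : mg g s 0 = 0 := mg_eq_zero g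
          (fun y hy => hnn y (uIcc_subset_unit hs (by norm_num) hy))
          right_mem_uIcc h0
        have hm0b : mg g 0 (s + t' - 1) = 0 := mg_eq_zero g
          (fun y hy => hnn y (uIcc_subset_unit (by norm_num) hbmem hy))
          left_mem_uIcc h0
        rw [hm0, hm0b]; ring
      have hmgbar : mg (gbar g s) t t'
          = min (g s - mg g s (s + t)) (g s - mg g s (s + t' - 1)) := by
        unfold mg
        rw [uIcc_of_le htt']
        show sInf (gbar g s '' Icc t t') = _
        rw [← Icc_union_Icc_eq_Icc ht1s h1st', image_union]
        have hsub1 : Icc t (1 - s) ⊆ Icc (0:ℝ) 1 :=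
          Icc_subset_Icc ht.1 (by linarith [hs.1])
        have hsub2 : Icc (1 - s) t' ⊆ Icc (0:ℝ) 1 :=
          Icc_subset_Icc (by linarith [hs.2]) ht'.2
        rw [csInf_union
          (bdd_of_nonneg fun x hx => gbar_nonneg g hnn hs x (hsub1 hx))
          (Nonempty.image _ (nonempty_Icc.2 ht1s))
          (bdd_of_nonneg fun x hx => gbar_nonneg g hnn hs x (hsub2 hx))
          (Nonempty.image _ (nonempty_Icc.2 h1st'))]
        rw [hsinf1, hsinf2]
        rfl
      have hsplit : mg g (s + t) (s + t' - 1)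
          = min (mg g s (s + t' - 1)) (mg g s (s + t)) := by
        rw [mg_comm, mg_split g hbs hsa (bdd01 hnn hbmem hs) (bdd01 hnn hs hamem),
          mg_comm g (s + t' - 1) s]
      simp only [deltag, gbar, hopt, hopt', hmgbar, hsplit]
      rcases le_total (mg g s (s + t)) (mg g s (s + t' - 1)) with h | h
      · rw [min_eq_right (by linarith), min_eq_right h]
        ring
      · rw [min_eq_left (by linarith), min_eq_left h]
        ring
    · -- both wrap
      push_neg at hC1 hC2
      have hopt : oplus s t = s + t - 1 := if_neg (not_le.2 hC2)
      have hopt' : oplus s t' = s + t' - 1 := if_neg (not_le.2 (by linarith))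
      have h0a : (0:ℝ) ≤ s + t - 1 := by linarith
      have hab : s + t - 1 ≤ s + t' - 1 := by linarith
      have hbs : s + t' - 1 ≤ s := by linarith [ht'.2]
      have hamem : s + t - 1 ∈ Icc (0:ℝ) 1 := ⟨h0a, by linarith [hs.2, ht.2]⟩
      have hbmem : s + t' - 1 ∈ Icc (0:ℝ) 1 := ⟨by linarith, by linarith [hs.2, ht'.2]⟩
      have himg : gbar g s '' Icc t t'
          = (fun v => g s + (g v - 2 * mg g s v)) '' Icc (s + t - 1) (s + t' - 1) := by
        rw [show Icc (s + t - 1) (s + t' - 1) = (fun x => (s - 1) + x) '' Icc t t' by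
          rw [Set.image_const_add_Icc]; congr 1 <;> ring]
        rw [image_image]
        refine image_congr fun r hr => ?_
        unfold gbar oplus
        rw [if_neg (not_le.2 (by linarith [hr.1] : (1:ℝ) < s + r))]
        rw [show s + r - 1 = (s - 1) + r by ring]
        ring
      have hmgbar : mg (gbar g s) t t'
          = g s + (mg g (s+t-1) (s+t'-1) - mg g s (s+t'-1) - mg g s (s+t-1)) := by
        unfold mg
        rw [uIcc_of_le htt']
        show sInf (gbar g s '' Icc t t') = _
        rw [himg, sInf_const_add _ _ (nonempty_Icc.2 hab)
          (bddF g hnn hs (Icc_subset_Icc hamem.1 hbmem.2))]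
        rw [star' g hab hbs (hc.mono (Icc_subset_Icc hamem.1 hs.2))
          (fun x hx => hnn x ⟨hamem.1.trans hx.1, hx.2.trans hs.2⟩)]
        rfl
      simp only [deltag, gbar, hopt, hopt', hmgbar]
      ring

lemma simg_iff_deltag (f : ℝ → ℝ) {a b : ℝ} (hb : BddBelow (f '' uIcc a b)) :
    simg f a b ↔ deltag f a b = 0 := by
  have h1 : mg f a b ≤ f a := mg_le f hb left_mem_uIcc
  have h2 : mg f a b ≤ f b := mg_le f hb right_mem_uIcc
  unfold simg deltag
  constructor
  · rintro ⟨e1, e2⟩; linarith [e1, e2]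
  · intro h; constructor <;> linarith

lemma deltag_comm (f : ℝ → ℝ) (a b : ℝ) : deltag f a b = deltag f b a := by
  unfold deltag; rw [mg_comm]; ring

/-- Re-rooting identity: for `g : [0,1] → ℝ≥0` continuous with `g(0) = g(1) = 0` and
`s* ∈ [0,1]`, one has `s* ⊕ t ∼_g s* ⊕ t'` if and only if `t ∼_{ḡ} t'`. -/
theorem stmt_16 (g : ℝ → ℝ) (hc : ContinuousOn g (Set.Icc 0 1))
    (hnn : ∀ t ∈ Set.Icc (0 : ℝ) 1, 0 ≤ g t) (h0 : g 0 = 0) (h1 : g 1 = 0)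
    (sstar : ℝ) (hs : sstar ∈ Set.Icc (0 : ℝ) 1) :
    ∀ t ∈ Set.Icc (0 : ℝ) 1, ∀ t' ∈ Set.Icc (0 : ℝ) 1,
      (simg g (oplus sstar t) (oplus sstar t') ↔ simg (gbar g sstar) t t') := by
  intro t ht t' ht'
  have hu := oplus_mem hs ht
  have hu' := oplus_mem hs ht'
  have e1 : simg g (oplus sstar t) (oplus sstar t')
      ↔ deltag g (oplus sstar t) (oplus sstar t') = 0 :=
    simg_iff_deltag g (bdd01 hnn hu hu')
  have e2 : simg (gbar g sstar) t t' ↔ deltag (gbar g sstar) t t' = 0 :=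
    simg_iff_deltag _ (bdd_of_nonneg fun x hx =>
      gbar_nonneg g hnn hs x (uIcc_subset_unit ht ht' hx))
  rw [e1, e2]
  rcases le_total t t' with h | h
  · rw [main_le g hc hnn h0 h1 hs ht ht' h]
  · rw [deltag_comm g, deltag_comm (gbar g sstar),
      main_le g hc hnn h0 h1 hs ht' ht h]
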